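/- The tableau system TC_SCI is terminating: for every SCI-formula φ, on any branch of a TC_SCI-tableau with a labelled formula w : φ at the root, rules are applied at most |φ| + |φ|² + 1 times, where |φ| denotes the number of occurrences of subformulas of φ; consequently every TC_SCI-tableau for φ is finite. -/

import Mathlib

/-- SCI-formulas: atoms, negation, implication, and the identity connective. -/
inductive SCIForm : Type
  | atom : ℕ → SCIForm
  | not : SCIForm → SCIForm
  | imp : SCIForm → SCIForm → SCIForm
  | idn : SCIForm → SCIForm → SCIForm
  deriving DecidableEq

/-- An SCI-structure over a carrier type `U`: a set of designated values and
operations interpreting ¬, →, ≡. -/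
structure SCIStruct (U : Type) where
  D : Set U
  neg : U → U
  imp : U → U → U
  idn : U → U → U

/-- `M` is an SCI-model: `U` is non-empty, `D` is a proper subset of `U`, and the
three semantic conditions hold. -/
def IsSCIModel {U : Type} (M : SCIStruct U) : Prop :=
  Nonempty U ∧ M.D ≠ Set.univ ∧
  (∀ a : U, M.neg a ∈ M.D ↔ a ∉ M.D) ∧
  (∀ a b : U, M.imp a b ∈ M.D ↔ (a ∉ M.D ∨ b ∈ M.D)) ∧
  (∀ a b : U, M.idn a b ∈ M.D ↔ a = b)

/-- A valuation in an SCI-structure: a homomorphism from formulas to `U`. -/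
def IsValuation {U : Type} (M : SCIStruct U) (V : SCIForm → U) : Prop :=
  (∀ φ, V (SCIForm.not φ) = M.neg (V φ)) ∧
  (∀ φ ψ, V (SCIForm.imp φ ψ) = M.imp (V φ) (V ψ)) ∧
  (∀ φ ψ, V (SCIForm.idn φ ψ) = M.idn (V φ) (V ψ))

/-- A formula is SCI-satisfiable if its denotation is designated in some
SCI-model under some valuation. -/
def SCISatisfiable (φ : SCIForm) : Prop :=
  ∃ (U : Type) (M : SCIStruct U) (V : SCIForm → U),
    IsSCIModel M ∧ IsValuation M V ∧ V φ ∈ M.D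

/-- A formula is SCI-valid if its denotation is designated in every SCI-model
under every valuation. -/
def SCIValid (φ : SCIForm) : Prop :=
  ∀ (U : Type) (M : SCIStruct U) (V : SCIForm → U),
    IsSCIModel M → IsValuation M V → V φ ∈ M.D

/-- Labels: a Boolean polarity (`true` = the set L⁺, `false` = the set L⁻)
together with a natural number index; L⁺ and L⁻ are disjoint and countably
infinite. -/
abbrev Label : Type := Bool × ℕ

/-- `w` belongs to L⁺. -/
def posL (w : Label) : Prop := w.1 = true

/-- `w` belongs to L⁻. -/
def negL (w : Label) : Prop := w.1 = false

/-- Expressions occurring on tableau branches: labelled formulas `w : φ`,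
equalities `w = v`, inequalities `w ≠ v`, and the closure symbol ⊥. -/
inductive Node : Type
  | lf : Label → SCIForm → Node
  | eq : Label → Label → Node
  | neq : Label → Label → Node
  | bot : Node
  deriving DecidableEq

/-- `|φ|`: the number of occurrences of subformulas of `φ`. -/
def SCIForm.size : SCIForm → ℕ
  | SCIForm.atom _ => 1
  | SCIForm.not φ => SCIForm.size φ + 1
  | SCIForm.imp φ ψ => SCIForm.size φ + SCIForm.size ψ + 1
  | SCIForm.idn φ ψ => SCIForm.size φ + SCIForm.size ψ + 1

/-- A label is fresh on a branch: no labelled formula on the branch carries it. -/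
def freshL (v : Label) (l : List Node) : Prop := ∀ φ, Node.lf v φ ∉ l

/-- One application of a TC_SCI rule extending a single branch.  A branch is a
list of nodes (in order of introduction, root first) together with the set `E`
of labelled formulas to which a decomposition rule has already been applied
(each decomposition rule may be applied only once to a given labelled formula,
each equality rule only if its conclusion is not yet on the branch, and no rule
is applied to a closed branch). -/
inductive Extend : List Node → Set (Label × SCIForm) → List Node → Set (Label × SCIForm) → Prop
  | negP (l : List Node) (E : Set (Label × SCIForm)) (w v : Label) (φ : SCIForm) :
      Node.bot ∉ l → posL w → Node.lf w (SCIForm.not φ) ∈ l → (w, SCIForm.not φ) ∉ E →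
      negL v → freshL v l →
      Extend l E (l ++ [Node.lf v φ]) (insert (w, SCIForm.not φ) E)
  | negN (l : List Node) (E : Set (Label × SCIForm)) (w v : Label) (φ : SCIForm) :
      Node.bot ∉ l → negL w → Node.lf w (SCIForm.not φ) ∈ l → (w, SCIForm.not φ) ∉ E →
      posL v → freshL v l →
      Extend l E (l ++ [Node.lf v φ]) (insert (w, SCIForm.not φ) E)
  | impP1 (l : List Node) (E : Set (Label × SCIForm)) (w v u : Label) (φ ψ : SCIForm) :
      Node.bot ∉ l → posL w → Node.lf w (SCIForm.imp φ ψ) ∈ l → (w, SCIForm.imp φ ψ) ∉ E →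
      negL v → negL u → v ≠ u → freshL v l → freshL u l →
      Extend l E (l ++ [Node.lf v φ, Node.lf u ψ]) (insert (w, SCIForm.imp φ ψ) E)
  | impP2 (l : List Node) (E : Set (Label × SCIForm)) (w v u : Label) (φ ψ : SCIForm) :
      Node.bot ∉ l → posL w → Node.lf w (SCIForm.imp φ ψ) ∈ l → (w, SCIForm.imp φ ψ) ∉ E →
      negL v → posL u → v ≠ u → freshL v l → freshL u l →
      Extend l E (l ++ [Node.lf v φ, Node.lf u ψ]) (insert (w, SCIForm.imp φ ψ) E)
  | impP3 (l : List Node) (E : Set (Label × SCIForm)) (w v u : Label) (φ ψ : SCIForm) :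
      Node.bot ∉ l → posL w → Node.lf w (SCIForm.imp φ ψ) ∈ l → (w, SCIForm.imp φ ψ) ∉ E →
      posL v → posL u → v ≠ u → freshL v l → freshL u l →
      Extend l E (l ++ [Node.lf v φ, Node.lf u ψ]) (insert (w, SCIForm.imp φ ψ) E)
  | impN (l : List Node) (E : Set (Label × SCIForm)) (w v u : Label) (φ ψ : SCIForm) :
      Node.bot ∉ l → negL w → Node.lf w (SCIForm.imp φ ψ) ∈ l → (w, SCIForm.imp φ ψ) ∉ E →
      posL v → negL u → v ≠ u → freshL v l → freshL u l →
      Extend l E (l ++ [Node.lf v φ, Node.lf u ψ]) (insert (w, SCIForm.imp φ ψ) E)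
  | idnP1 (l : List Node) (E : Set (Label × SCIForm)) (w v u : Label) (φ ψ : SCIForm) :
      Node.bot ∉ l → posL w → Node.lf w (SCIForm.idn φ ψ) ∈ l → (w, SCIForm.idn φ ψ) ∉ E →
      posL v → posL u → v ≠ u → freshL v l → freshL u l →
      Extend l E (l ++ [Node.lf v φ, Node.lf u ψ, Node.eq v u]) (insert (w, SCIForm.idn φ ψ) E)
  | idnP2 (l : List Node) (E : Set (Label × SCIForm)) (w v u : Label) (φ ψ : SCIForm) :
      Node.bot ∉ l → posL w → Node.lf w (SCIForm.idn φ ψ) ∈ l → (w, SCIForm.idn φ ψ) ∉ E →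
      negL v → negL u → v ≠ u → freshL v l → freshL u l →
      Extend l E (l ++ [Node.lf v φ, Node.lf u ψ, Node.eq v u]) (insert (w, SCIForm.idn φ ψ) E)
  | idnN1 (l : List Node) (E : Set (Label × SCIForm)) (w v u : Label) (φ ψ : SCIForm) :
      Node.bot ∉ l → negL w → Node.lf w (SCIForm.idn φ ψ) ∈ l → (w, SCIForm.idn φ ψ) ∉ E →
      posL v → posL u → v ≠ u → freshL v l → freshL u l →
      Extend l E (l ++ [Node.lf v φ, Node.lf u ψ, Node.neq v u]) (insert (w, SCIForm.idn φ ψ) E)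
  | idnN2 (l : List Node) (E : Set (Label × SCIForm)) (w v u : Label) (φ ψ : SCIForm) :
      Node.bot ∉ l → negL w → Node.lf w (SCIForm.idn φ ψ) ∈ l → (w, SCIForm.idn φ ψ) ∉ E →
      posL v → negL u → v ≠ u → freshL v l → freshL u l →
      Extend l E (l ++ [Node.lf v φ, Node.lf u ψ]) (insert (w, SCIForm.idn φ ψ) E)
  | idnN3 (l : List Node) (E : Set (Label × SCIForm)) (w v u : Label) (φ ψ : SCIForm) :
      Node.bot ∉ l → negL w → Node.lf w (SCIForm.idn φ ψ) ∈ l → (w, SCIForm.idn φ ψ) ∉ E →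
      negL v → posL u → v ≠ u → freshL v l → freshL u l →
      Extend l E (l ++ [Node.lf v φ, Node.lf u ψ]) (insert (w, SCIForm.idn φ ψ) E)
  | idnN4 (l : List Node) (E : Set (Label × SCIForm)) (w v u : Label) (φ ψ : SCIForm) :
      Node.bot ∉ l → negL w → Node.lf w (SCIForm.idn φ ψ) ∈ l → (w, SCIForm.idn φ ψ) ∉ E →
      negL v → negL u → v ≠ u → freshL v l → freshL u l →
      Extend l E (l ++ [Node.lf v φ, Node.lf u ψ, Node.neq v u]) (insert (w, SCIForm.idn φ ψ) E)
  | eqNeg (l : List Node) (E : Set (Label × SCIForm)) (w v u y : Label) (φ ψ : SCIForm) :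
      Node.bot ∉ l → Node.lf w φ ∈ l → Node.lf v ψ ∈ l → Node.eq w v ∈ l →
      Node.lf u (SCIForm.not φ) ∈ l → Node.lf y (SCIForm.not ψ) ∈ l →
      Node.eq u y ∉ l →
      Extend l E (l ++ [Node.eq u y]) E
  | eqImp (l : List Node) (E : Set (Label × SCIForm)) (w v w' v' x z : Label) (φ ψ χ θ : SCIForm) :
      Node.bot ∉ l → Node.lf w φ ∈ l → Node.lf v ψ ∈ l → Node.eq w v ∈ l →
      Node.lf w' χ ∈ l → Node.lf v' θ ∈ l → Node.eq w' v' ∈ l →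
      Node.lf x (SCIForm.imp φ χ) ∈ l → Node.lf z (SCIForm.imp ψ θ) ∈ l →
      Node.eq x z ∉ l →
      Extend l E (l ++ [Node.eq x z]) E
  | eqIdn (l : List Node) (E : Set (Label × SCIForm)) (w v w' v' x z : Label) (φ ψ χ θ : SCIForm) :
      Node.bot ∉ l → Node.lf w φ ∈ l → Node.lf v ψ ∈ l → Node.eq w v ∈ l →
      Node.lf w' χ ∈ l → Node.lf v' θ ∈ l → Node.eq w' v' ∈ l →
      Node.lf x (SCIForm.idn φ χ) ∈ l → Node.lf z (SCIForm.idn ψ θ) ∈ l →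
      Node.eq x z ∉ l →
      Extend l E (l ++ [Node.eq x z]) E
  | ruleF (l : List Node) (E : Set (Label × SCIForm)) (w v : Label) (φ : SCIForm) :
      Node.bot ∉ l → Node.lf w φ ∈ l → Node.lf v φ ∈ l → Node.eq w v ∉ l →
      Extend l E (l ++ [Node.eq w v]) E
  | ruleSym (l : List Node) (E : Set (Label × SCIForm)) (w v : Label) :
      Node.bot ∉ l → Node.eq w v ∈ l → Node.eq v w ∉ l →
      Extend l E (l ++ [Node.eq v w]) E
  | ruleTran (l : List Node) (E : Set (Label × SCIForm)) (w v u : Label) :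
      Node.bot ∉ l → Node.eq w v ∈ l → Node.eq v u ∈ l → Node.eq w u ∉ l →
      Extend l E (l ++ [Node.eq w u]) E
  | bot1 (l : List Node) (E : Set (Label × SCIForm)) (w v : Label) :
      Node.bot ∉ l → Node.eq w v ∈ l → Node.neq w v ∈ l →
      Extend l E (l ++ [Node.bot]) E
  | bot2 (l : List Node) (E : Set (Label × SCIForm)) (w v : Label) :
      Node.bot ∉ l → posL w → negL v → Node.eq w v ∈ l →
      Extend l E (l ++ [Node.bot]) E

/-- `ClosedTab l E` holds iff there is a closed TC_SCI-tableau all of whose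
branches extend the branch `l` (with `E` the set of labelled formulas already
decomposed on `l`): either a closure rule applies to `l`, or some rule of
TC_SCI can be applied so that all resulting branches carry closed tableaux. -/
inductive ClosedTab : List Node → Set (Label × SCIForm) → Prop
  | clos1 (l : List Node) (E : Set (Label × SCIForm)) (w v : Label) :
      Node.eq w v ∈ l → Node.neq w v ∈ l → ClosedTab l E
  | clos2 (l : List Node) (E : Set (Label × SCIForm)) (w v : Label) :
      posL w → negL v → Node.eq w v ∈ l → ClosedTab l E
  | negP (l : List Node) (E : Set (Label × SCIForm)) (w v : Label) (φ : SCIForm) :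
      posL w → Node.lf w (SCIForm.not φ) ∈ l → (w, SCIForm.not φ) ∉ E →
      negL v → freshL v l →
      ClosedTab (l ++ [Node.lf v φ]) (insert (w, SCIForm.not φ) E) →
      ClosedTab l E
  | negN (l : List Node) (E : Set (Label × SCIForm)) (w v : Label) (φ : SCIForm) :
      negL w → Node.lf w (SCIForm.not φ) ∈ l → (w, SCIForm.not φ) ∉ E →
      posL v → freshL v l →
      ClosedTab (l ++ [Node.lf v φ]) (insert (w, SCIForm.not φ) E) →
      ClosedTab l E
  | impP (l : List Node) (E : Set (Label × SCIForm)) (w : Label) (φ ψ : SCIForm)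
      (v1 u1 v2 u2 v3 u3 : Label) :
      posL w → Node.lf w (SCIForm.imp φ ψ) ∈ l → (w, SCIForm.imp φ ψ) ∉ E →
      negL v1 → negL u1 → v1 ≠ u1 → freshL v1 l → freshL u1 l →
      negL v2 → posL u2 → v2 ≠ u2 → freshL v2 l → freshL u2 l →
      posL v3 → posL u3 → v3 ≠ u3 → freshL v3 l → freshL u3 l →
      ClosedTab (l ++ [Node.lf v1 φ, Node.lf u1 ψ]) (insert (w, SCIForm.imp φ ψ) E) →
      ClosedTab (l ++ [Node.lf v2 φ, Node.lf u2 ψ]) (insert (w, SCIForm.imp φ ψ) E) →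
      ClosedTab (l ++ [Node.lf v3 φ, Node.lf u3 ψ]) (insert (w, SCIForm.imp φ ψ) E) →
      ClosedTab l E
  | impN (l : List Node) (E : Set (Label × SCIForm)) (w v u : Label) (φ ψ : SCIForm) :
      negL w → Node.lf w (SCIForm.imp φ ψ) ∈ l → (w, SCIForm.imp φ ψ) ∉ E →
      posL v → negL u → v ≠ u → freshL v l → freshL u l →
      ClosedTab (l ++ [Node.lf v φ, Node.lf u ψ]) (insert (w, SCIForm.imp φ ψ) E) →
      ClosedTab l E
  | idnP (l : List Node) (E : Set (Label × SCIForm)) (w : Label) (φ ψ : SCIForm)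
      (v1 u1 v2 u2 : Label) :
      posL w → Node.lf w (SCIForm.idn φ ψ) ∈ l → (w, SCIForm.idn φ ψ) ∉ E →
      posL v1 → posL u1 → v1 ≠ u1 → freshL v1 l → freshL u1 l →
      negL v2 → negL u2 → v2 ≠ u2 → freshL v2 l → freshL u2 l →
      ClosedTab (l ++ [Node.lf v1 φ, Node.lf u1 ψ, Node.eq v1 u1]) (insert (w, SCIForm.idn φ ψ) E) →
      ClosedTab (l ++ [Node.lf v2 φ, Node.lf u2 ψ, Node.eq v2 u2]) (insert (w, SCIForm.idn φ ψ) E) →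
      ClosedTab l E
  | idnN (l : List Node) (E : Set (Label × SCIForm)) (w : Label) (φ ψ : SCIForm)
      (v1 u1 v2 u2 v3 u3 v4 u4 : Label) :
      negL w → Node.lf w (SCIForm.idn φ ψ) ∈ l → (w, SCIForm.idn φ ψ) ∉ E →
      posL v1 → posL u1 → v1 ≠ u1 → freshL v1 l → freshL u1 l →
      posL v2 → negL u2 → v2 ≠ u2 → freshL v2 l → freshL u2 l →
      negL v3 → posL u3 → v3 ≠ u3 → freshL v3 l → freshL u3 l →
      negL v4 → negL u4 → v4 ≠ u4 → freshL v4 l → freshL u4 l →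
      ClosedTab (l ++ [Node.lf v1 φ, Node.lf u1 ψ, Node.neq v1 u1]) (insert (w, SCIForm.idn φ ψ) E) →
      ClosedTab (l ++ [Node.lf v2 φ, Node.lf u2 ψ]) (insert (w, SCIForm.idn φ ψ) E) →
      ClosedTab (l ++ [Node.lf v3 φ, Node.lf u3 ψ]) (insert (w, SCIForm.idn φ ψ) E) →
      ClosedTab (l ++ [Node.lf v4 φ, Node.lf u4 ψ, Node.neq v4 u4]) (insert (w, SCIForm.idn φ ψ) E) →
      ClosedTab l E
  | eqNeg (l : List Node) (E : Set (Label × SCIForm)) (w v u y : Label) (φ ψ : SCIForm) :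
      Node.lf w φ ∈ l → Node.lf v ψ ∈ l → Node.eq w v ∈ l →
      Node.lf u (SCIForm.not φ) ∈ l → Node.lf y (SCIForm.not ψ) ∈ l →
      Node.eq u y ∉ l →
      ClosedTab (l ++ [Node.eq u y]) E → ClosedTab l E
  | eqImp (l : List Node) (E : Set (Label × SCIForm)) (w v w' v' x z : Label) (φ ψ χ θ : SCIForm) :
      Node.lf w φ ∈ l → Node.lf v ψ ∈ l → Node.eq w v ∈ l →
      Node.lf w' χ ∈ l → Node.lf v' θ ∈ l → Node.eq w' v' ∈ l →
      Node.lf x (SCIForm.imp φ χ) ∈ l → Node.lf z (SCIForm.imp ψ θ) ∈ l →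
      Node.eq x z ∉ l →
      ClosedTab (l ++ [Node.eq x z]) E → ClosedTab l E
  | eqIdn (l : List Node) (E : Set (Label × SCIForm)) (w v w' v' x z : Label) (φ ψ χ θ : SCIForm) :
      Node.lf w φ ∈ l → Node.lf v ψ ∈ l → Node.eq w v ∈ l →
      Node.lf w' χ ∈ l → Node.lf v' θ ∈ l → Node.eq w' v' ∈ l →
      Node.lf x (SCIForm.idn φ χ) ∈ l → Node.lf z (SCIForm.idn ψ θ) ∈ l →
      Node.eq x z ∉ l →
      ClosedTab (l ++ [Node.eq x z]) E → ClosedTab l E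
  | ruleF (l : List Node) (E : Set (Label × SCIForm)) (w v : Label) (φ : SCIForm) :
      Node.lf w φ ∈ l → Node.lf v φ ∈ l → Node.eq w v ∉ l →
      ClosedTab (l ++ [Node.eq w v]) E → ClosedTab l E
  | ruleSym (l : List Node) (E : Set (Label × SCIForm)) (w v : Label) :
      Node.eq w v ∈ l → Node.eq v w ∉ l →
      ClosedTab (l ++ [Node.eq v w]) E → ClosedTab l E
  | ruleTran (l : List Node) (E : Set (Label × SCIForm)) (w v u : Label) :
      Node.eq w v ∈ l → Node.eq v u ∈ l → Node.eq w u ∉ l →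
      ClosedTab (l ++ [Node.eq w u]) E → ClosedTab l E

namespace SCITermAux

def lfP : Node → Option (Label × SCIForm)
  | Node.lf v ψ => some (v, ψ)
  | _ => none

def eqP : Node → Option (Label × Label)
  | Node.eq a b => some (a, b)
  | _ => none

@[simp] lemma lfP_lf (v : Label) (ψ : SCIForm) : lfP (Node.lf v ψ) = some (v, ψ) := rfl
@[simp] lemma lfP_eq (a b : Label) : lfP (Node.eq a b) = none := rfl
@[simp] lemma lfP_neq (a b : Label) : lfP (Node.neq a b) = none := rfl
@[simp] lemma lfP_bot : lfP Node.bot = none := rfl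
@[simp] lemma eqP_lf (v : Label) (ψ : SCIForm) : eqP (Node.lf v ψ) = none := rfl
@[simp] lemma eqP_eq (a b : Label) : eqP (Node.eq a b) = some (a, b) := rfl
@[simp] lemma eqP_neq (a b : Label) : eqP (Node.neq a b) = none := rfl
@[simp] lemma eqP_bot : eqP Node.bot = none := rfl

def lfPairs (l : List Node) : List (Label × SCIForm) := l.filterMap lfP
def eqPairs (l : List Node) : List (Label × Label) := l.filterMap eqP
def lfLabels (l : List Node) : List Label := (lfPairs l).map Prod.fst

lemma lfP_eq_some {n : Node} {v : Label} {ψ : SCIForm} :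
    lfP n = some (v, ψ) ↔ n = Node.lf v ψ := by
  cases n <;> simp [lfP]

lemma eqP_eq_some {n : Node} {a b : Label} :
    eqP n = some (a, b) ↔ n = Node.eq a b := by
  cases n <;> simp [eqP]

lemma mem_lfPairs {l : List Node} {v : Label} {ψ : SCIForm} :
    (v, ψ) ∈ lfPairs l ↔ Node.lf v ψ ∈ l := by
  simp [lfPairs, List.mem_filterMap, lfP_eq_some]

lemma mem_eqPairs {l : List Node} {a b : Label} :
    (a, b) ∈ eqPairs l ↔ Node.eq a b ∈ l := by
  simp [eqPairs, List.mem_filterMap, eqP_eq_some]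

lemma mem_lfLabels {l : List Node} {v : Label} :
    v ∈ lfLabels l ↔ ∃ ψ, Node.lf v ψ ∈ l := by
  constructor
  · intro hv
    obtain ⟨⟨a, ψ⟩, hp, rfl⟩ := List.mem_map.mp hv
    exact ⟨ψ, mem_lfPairs.mp hp⟩
  · rintro ⟨ψ, hψ⟩
    exact List.mem_map.mpr ⟨(v, ψ), mem_lfPairs.mpr hψ, rfl⟩

lemma fresh_iff {v : Label} {l : List Node} : freshL v l ↔ v ∉ lfLabels l := by
  simp [freshL, mem_lfLabels]

lemma lfPairs_append (l m : List Node) : lfPairs (l ++ m) = lfPairs l ++ lfPairs m :=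
  List.filterMap_append
lemma eqPairs_append (l m : List Node) : eqPairs (l ++ m) = eqPairs l ++ eqPairs m :=
  List.filterMap_append

lemma size_pos (φ : SCIForm) : 1 ≤ φ.size := by
  cases φ <;> simp [SCIForm.size]

noncomputable def wt (c : ℕ) (E : Set (Label × SCIForm)) (p : Label × SCIForm) : ℕ :=
  @ite _ (p ∈ E) (Classical.propDecidable _) c p.2.size

lemma wt_of_mem {E : Set (Label × SCIForm)} {p} (c : ℕ) (h : p ∈ E) : wt c E p = c := by
  simp [wt, h]

lemma wt_of_not_mem {E : Set (Label × SCIForm)} {p} (c : ℕ) (h : p ∉ E) :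
    wt c E p = p.2.size := by
  simp [wt, h]

noncomputable def wtW (E : Set (Label × SCIForm)) (l : List Node) : ℕ :=
  ((lfPairs l).map (wt 1 E)).sum

noncomputable def wtA (E : Set (Label × SCIForm)) (l : List Node) : ℕ :=
  ((lfPairs l).map (wt 0 E)).sum

noncomputable def meas (s : ℕ) (l : List Node) (E : Set (Label × SCIForm)) : ℕ :=
  (if Node.bot ∈ l then 0 else 1) + wtA E l + (s * s - (eqPairs l).length)

structure Inv (l : List Node) (E : Set (Label × SCIForm)) : Prop where
  nd : (lfLabels l).Nodup
  esub : ∀ p ∈ E, p ∈ lfPairs l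
  eqlab : ∀ a b, Node.eq a b ∈ l → a ∈ lfLabels l ∧ b ∈ lfLabels l
  nde : (eqPairs l).Nodup

lemma flip_sum (c : ℕ) (E : Set (Label × SCIForm)) (L : List (Label × SCIForm))
    (hnd : (L.map Prod.fst).Nodup) {p : Label × SCIForm} (hp : p ∈ L) (hpE : p ∉ E) :
    (L.map (wt c (insert p E))).sum + p.2.size = (L.map (wt c E)).sum + c := by
  obtain ⟨s1, s2, rfl⟩ := List.append_of_mem hp
  simp only [List.map_append, List.map_cons, List.nodup_append, List.nodup_cons] at hnd
  have hq1 : ∀ q ∈ s1, q ≠ p := by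
    intro q hq hqp
    exact hnd.2.2 _ (List.mem_map.mpr ⟨q, hq, rfl⟩) _ (by simp) (congrArg Prod.fst hqp)
  have hq2 : ∀ q ∈ s2, q ≠ p := by
    intro q hq hqp
    exact hnd.2.1.1 (List.mem_map.mpr ⟨q, hq, hqp ▸ rfl⟩)
  classical
  have key : ∀ (s : List (Label × SCIForm)), (∀ q ∈ s, q ≠ p) →
      s.map (wt c (insert p E)) = s.map (wt c E) := by
    intro s hs
    apply List.map_congr_left
    intro q hq
    simp [wt, Set.mem_insert_iff, hs q hq]
  have hp1 : wt c (insert p E) p = c := wt_of_mem c (Set.mem_insert p E)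
  have hp2 : wt c E p = p.2.size := wt_of_not_mem c hpE
  simp only [List.map_append, List.map_cons, List.sum_append, List.sum_cons,
    key s1 hq1, key s2 hq2, hp1, hp2]
  ring


lemma wtW_insert {l : List Node} {E : Set (Label × SCIForm)} {w : Label} {ψ : SCIForm}
    (hnd : (lfLabels l).Nodup) (hw : Node.lf w ψ ∈ l) (hE : (w, ψ) ∉ E) :
    wtW (insert (w, ψ) E) l + ψ.size = wtW E l + 1 :=
  flip_sum 1 E (lfPairs l) hnd (mem_lfPairs.mpr hw) hE

lemma wtA_insert {l : List Node} {E : Set (Label × SCIForm)} {w : Label} {ψ : SCIForm}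
    (hnd : (lfLabels l).Nodup) (hw : Node.lf w ψ ∈ l) (hE : (w, ψ) ∉ E) :
    wtA (insert (w, ψ) E) l + ψ.size = wtA E l := by
  have h := flip_sum 0 E (lfPairs l) hnd (mem_lfPairs.mpr hw) hE
  simpa [wtA] using h

lemma wtW_append (E : Set (Label × SCIForm)) (l m : List Node) :
    wtW E (l ++ m) = wtW E l + wtW E m := by
  simp [wtW, lfPairs_append]

lemma wtA_append (E : Set (Label × SCIForm)) (l m : List Node) :
    wtA E (l ++ m) = wtA E l + wtA E m := by
  simp [wtA, lfPairs_append]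

lemma step_unary {l : List Node} {E : Set (Label × SCIForm)} {w v : Label} {ψ a : SCIForm}
    (hI : Inv l E) (hw : Node.lf w ψ ∈ l) (hE : (w, ψ) ∉ E)
    (hsz : a.size + 1 = ψ.size) (hv : freshL v l) :
    Inv (l ++ [Node.lf v a]) (insert (w, ψ) E) ∧
    wtW (insert (w, ψ) E) (l ++ [Node.lf v a]) = wtW E l ∧
    wtA (insert (w, ψ) E) (l ++ [Node.lf v a]) + 1 = wtA E l ∧
    eqPairs (l ++ [Node.lf v a]) = eqPairs l := by
  classical
  have hvn : v ∉ lfLabels l := fresh_iff.mp hv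
  have hwl : w ∈ lfLabels l := mem_lfLabels.mpr ⟨ψ, hw⟩
  have hvw : v ≠ w := fun hvw => hvn (hvw ▸ hwl)
  have hva_l : (v, a) ∉ lfPairs l := fun hmem => hvn (List.mem_map.mpr ⟨_, hmem, rfl⟩)
  have hva_E : (v, a) ∉ E := fun hmem => hva_l (hI.esub _ hmem)
  have hva_E' : (v, a) ∉ insert (w, ψ) E := by
    simp [Set.mem_insert_iff, hva_E, Prod.ext_iff, hvw]
  have hLP : lfPairs (l ++ [Node.lf v a]) = lfPairs l ++ [(v, a)] := by
    simp [lfPairs_append, lfPairs]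
  have hEQ : eqPairs (l ++ [Node.lf v a]) = eqPairs l := by
    simp [eqPairs_append, eqPairs]
  have hLab : lfLabels (l ++ [Node.lf v a]) = lfLabels l ++ [v] := by
    simp [lfLabels, hLP]
  refine ⟨⟨?_, ?_, ?_, ?_⟩, ?_, ?_, hEQ⟩
  · rw [hLab]
    refine List.Nodup.append hI.nd (by simp) ?_
    intro x hx1 hx2
    simp at hx2
    exact hvn (hx2 ▸ hx1)
  · intro p hp
    rw [hLP]
    rcases Set.mem_insert_iff.mp hp with hp | hp
    · exact List.mem_append_left _ (hp ▸ mem_lfPairs.mpr hw)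
    · exact List.mem_append_left _ (hI.esub p hp)
  · intro x y hxy
    have hxy' : Node.eq x y ∈ l := by
      rcases List.mem_append.mp hxy with h | h
      · exact h
      · simp at h
    obtain ⟨h1, h2⟩ := hI.eqlab x y hxy'
    rw [hLab]
    exact ⟨List.mem_append_left _ h1, List.mem_append_left _ h2⟩
  · rw [hEQ]; exact hI.nde
  · have h1 : wtW (insert (w, ψ) E) (l ++ [Node.lf v a])
        = wtW (insert (w, ψ) E) l + a.size := by
      rw [wtW_append]
      have : wtW (insert (w, ψ) E) [Node.lf v a] = a.size := by
        simp [wtW, lfPairs, wt_of_not_mem 1 hva_E']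
      rw [this]
    have h2 := wtW_insert hI.nd hw hE
    omega
  · have h1 : wtA (insert (w, ψ) E) (l ++ [Node.lf v a])
        = wtA (insert (w, ψ) E) l + a.size := by
      rw [wtA_append]
      have : wtA (insert (w, ψ) E) [Node.lf v a] = a.size := by
        simp [wtA, lfPairs, wt_of_not_mem 0 hva_E']
      rw [this]
    have h2 := wtA_insert hI.nd hw hE
    omega


lemma step_binary {l : List Node} {E : Set (Label × SCIForm)} {w v u : Label}
    {ψ a b : SCIForm} (hI : Inv l E) (hw : Node.lf w ψ ∈ l) (hE : (w, ψ) ∉ E)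
    (hsz : a.size + b.size + 1 = ψ.size)
    (hv : freshL v l) (hu : freshL u l) (hvu : v ≠ u)
    (tail : List Node) (hlf : tail.filterMap lfP = [])
    (heq : tail.filterMap eqP = [] ∨ tail.filterMap eqP = [(v, u)]) :
    Inv (l ++ Node.lf v a :: Node.lf u b :: tail) (insert (w, ψ) E) ∧
    wtW (insert (w, ψ) E) (l ++ Node.lf v a :: Node.lf u b :: tail) = wtW E l ∧
    wtA (insert (w, ψ) E) (l ++ Node.lf v a :: Node.lf u b :: tail) + 1 = wtA E l ∧
    ((eqPairs (l ++ Node.lf v a :: Node.lf u b :: tail)).length = (eqPairs l).length ∨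
      (eqPairs (l ++ Node.lf v a :: Node.lf u b :: tail)).length = (eqPairs l).length + 1) := by
  classical
  have hvn : v ∉ lfLabels l := fresh_iff.mp hv
  have hun : u ∉ lfLabels l := fresh_iff.mp hu
  have hwl : w ∈ lfLabels l := mem_lfLabels.mpr ⟨ψ, hw⟩
  have hvw : v ≠ w := fun h => hvn (h ▸ hwl)
  have huw : u ≠ w := fun h => hun (h ▸ hwl)
  have hva_l : (v, a) ∉ lfPairs l := fun hmem => hvn (List.mem_map.mpr ⟨_, hmem, rfl⟩)
  have hub_l : (u, b) ∉ lfPairs l := fun hmem => hun (List.mem_map.mpr ⟨_, hmem, rfl⟩)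
  have hva_E' : (v, a) ∉ insert (w, ψ) E := by
    simp only [Set.mem_insert_iff, not_or]
    exact ⟨by simp [Prod.ext_iff, hvw], fun hmem => hva_l (hI.esub _ hmem)⟩
  have hub_E' : (u, b) ∉ insert (w, ψ) E := by
    simp only [Set.mem_insert_iff, not_or]
    exact ⟨by simp [Prod.ext_iff, huw], fun hmem => hub_l (hI.esub _ hmem)⟩
  have hLP : lfPairs (l ++ Node.lf v a :: Node.lf u b :: tail)
      = lfPairs l ++ [(v, a), (u, b)] := by
    rw [lfPairs_append]
    simp [lfPairs, hlf]
  have hEQ : eqPairs (l ++ Node.lf v a :: Node.lf u b :: tail)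
      = eqPairs l ++ tail.filterMap eqP := by
    rw [eqPairs_append]
    simp [eqPairs, List.filterMap_cons]
  have hLab : lfLabels (l ++ Node.lf v a :: Node.lf u b :: tail)
      = lfLabels l ++ [v, u] := by
    simp [lfLabels, hLP]
  refine ⟨⟨?_, ?_, ?_, ?_⟩, ?_, ?_, ?_⟩
  · rw [hLab]
    refine List.Nodup.append hI.nd (by simp [hvu]) ?_
    intro x hx1 hx2
    simp at hx2
    rcases hx2 with rfl | rfl
    · exact hvn hx1
    · exact hun hx1
  · intro p hp
    rw [hLP]
    rcases Set.mem_insert_iff.mp hp with hp | hp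
    · exact List.mem_append_left _ (hp ▸ mem_lfPairs.mpr hw)
    · exact List.mem_append_left _ (hI.esub p hp)
  · intro x y hxy
    rw [hLab]
    rcases List.mem_append.mp hxy with h | h
    · obtain ⟨h1, h2⟩ := hI.eqlab x y h
      exact ⟨List.mem_append_left _ h1, List.mem_append_left _ h2⟩
    · have hsome : Node.eq x y ∈ tail := by
        rcases List.mem_cons.mp h with h | h
        · exact absurd h (by simp)
        rcases List.mem_cons.mp h with h | h
        · exact absurd h (by simp)
        · exact h
      have hmem : (x, y) ∈ tail.filterMap eqP :=
        List.mem_filterMap.mpr ⟨Node.eq x y, hsome, rfl⟩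
      rcases heq with h' | h'
      · rw [h'] at hmem; simp at hmem
      · rw [h'] at hmem
        simp at hmem
        obtain ⟨rfl, rfl⟩ := hmem
        constructor <;> · exact List.mem_append_right _ (by simp)
  · rw [hEQ]
    rcases heq with h' | h'
    · simpa [h'] using hI.nde
    · rw [h']
      refine List.Nodup.append hI.nde (by simp) ?_
      intro q hq1 hq2
      simp at hq2
      subst hq2
      exact hvn (hI.eqlab v u (mem_eqPairs.mp hq1)).1
  · have h1 : wtW (insert (w, ψ) E) (l ++ Node.lf v a :: Node.lf u b :: tail)
        = wtW (insert (w, ψ) E) l + (a.size + b.size) := by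
      rw [wtW, hLP, List.map_append, List.sum_append]
      have : ([(v, a), (u, b)].map (wt 1 (insert (w, ψ) E))).sum = a.size + b.size := by
        simp [wt_of_not_mem 1 hva_E', wt_of_not_mem 1 hub_E']
      rw [this]; rfl
    have h2 := wtW_insert hI.nd hw hE
    omega
  · have h1 : wtA (insert (w, ψ) E) (l ++ Node.lf v a :: Node.lf u b :: tail)
        = wtA (insert (w, ψ) E) l + (a.size + b.size) := by
      rw [wtA, hLP, List.map_append, List.sum_append]
      have : ([(v, a), (u, b)].map (wt 0 (insert (w, ψ) E))).sum = a.size + b.size := by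
        simp [wt_of_not_mem 0 hva_E', wt_of_not_mem 0 hub_E']
      rw [this]; rfl
    have h2 := wtA_insert hI.nd hw hE
    omega
  · rw [hEQ]
    rcases heq with h' | h' <;> simp [h']

lemma step_eq {l : List Node} {E : Set (Label × SCIForm)} {x y : Label} (hI : Inv l E)
    (hx : x ∈ lfLabels l) (hy : y ∈ lfLabels l) (hnew : Node.eq x y ∉ l) :
    Inv (l ++ [Node.eq x y]) E ∧ wtW E (l ++ [Node.eq x y]) = wtW E l ∧
    wtA E (l ++ [Node.eq x y]) = wtA E l ∧
    (eqPairs (l ++ [Node.eq x y])).length = (eqPairs l).length + 1 := by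
  have hLP : lfPairs (l ++ [Node.eq x y]) = lfPairs l := by
    simp [lfPairs_append, lfPairs]
  have hEQ : eqPairs (l ++ [Node.eq x y]) = eqPairs l ++ [(x, y)] := by
    simp [eqPairs_append, eqPairs]
  have hLab : lfLabels (l ++ [Node.eq x y]) = lfLabels l := by
    simp [lfLabels, hLP]
  refine ⟨⟨by rw [hLab]; exact hI.nd, ?_, ?_, ?_⟩,
    by simp [wtW, hLP], by simp [wtA, hLP], by simp [hEQ]⟩
  · intro p hp; rw [hLP]; exact hI.esub p hp
  · intro c d hcd
    rw [hLab]
    rcases List.mem_append.mp hcd with h | h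
    · exact hI.eqlab c d h
    · simp at h
      obtain ⟨rfl, rfl⟩ := h
      exact ⟨hx, hy⟩
  · rw [hEQ]
    refine List.Nodup.append hI.nde (by simp) ?_
    intro q hq1 hq2
    simp at hq2
    subst hq2
    exact hnew (mem_eqPairs.mp hq1)

lemma step_bot {l : List Node} {E : Set (Label × SCIForm)} (hI : Inv l E) :
    Inv (l ++ [Node.bot]) E ∧ wtW E (l ++ [Node.bot]) = wtW E l ∧
    wtA E (l ++ [Node.bot]) = wtA E l ∧ eqPairs (l ++ [Node.bot]) = eqPairs l := by
  have hLP : lfPairs (l ++ [Node.bot]) = lfPairs l := by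
    simp [lfPairs_append, lfPairs]
  have hEQ : eqPairs (l ++ [Node.bot]) = eqPairs l := by
    simp [eqPairs_append, eqPairs]
  have hLab : lfLabels (l ++ [Node.bot]) = lfLabels l := by
    simp [lfLabels, hLP]
  refine ⟨⟨by rw [hLab]; exact hI.nd, ?_, ?_, by rw [hEQ]; exact hI.nde⟩,
    by simp [wtW, hLP], by simp [wtA, hLP], hEQ⟩
  · intro p hp; rw [hLP]; exact hI.esub p hp
  · intro c d hcd
    rw [hLab]
    rcases List.mem_append.mp hcd with h | h
    · exact hI.eqlab c d h
    · simp at h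

lemma eqlen_le {l : List Node} {E : Set (Label × SCIForm)} (hI : Inv l E) :
    (eqPairs l).length ≤ wtW E l * wtW E l := by
  classical
  have h2 : (lfLabels l).length ≤ wtW E l := by
    have key : ∀ L : List (Label × SCIForm), L.length ≤ (L.map (wt 1 E)).sum := by
      intro L
      induction L with
      | nil => simp
      | cons p L ih =>
        have hp : 1 ≤ wt 1 E p := by
          by_cases h : p ∈ E
          · simp [wt_of_mem 1 h]
          · rw [wt_of_not_mem 1 h]; exact size_pos _
        simp only [List.length_cons, List.map_cons, List.sum_cons]
        omega
    simpa [lfLabels, wtW] using key (lfPairs l)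
  have h1 : (eqPairs l).length ≤ (lfLabels l).length * (lfLabels l).length := by
    have hsub : (eqPairs l).toFinset ⊆ (lfLabels l).toFinset ×ˢ (lfLabels l).toFinset := by
      intro q hq
      obtain ⟨c, d⟩ := q
      have h := hI.eqlab c d (mem_eqPairs.mp (List.mem_toFinset.mp hq))
      simp only [Finset.mem_product, List.mem_toFinset]
      exact ⟨h.1, h.2⟩
    have hcard := Finset.card_le_card hsub
    rw [List.toFinset_card_of_nodup hI.nde, Finset.card_product] at hcard
    exact hcard.trans (Nat.mul_le_mul (List.toFinset_card_le _) (List.toFinset_card_le _))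
  exact h1.trans (Nat.mul_le_mul h2 h2)


lemma finish_decomp {l l' : List Node} {E E' : Set (Label × SCIForm)}
    (hb : Node.bot ∉ l) (hb' : Node.bot ∉ l')
    (hA : wtA E' l' + 1 = wtA E l)
    (hlen : (eqPairs l').length = (eqPairs l).length ∨
      (eqPairs l').length = (eqPairs l).length + 1) :
    ∀ s, (eqPairs l').length ≤ s * s → meas s l' E' < meas s l E := by
  intro s _
  simp only [meas, if_neg hb, if_neg hb']
  rcases hlen with h | h <;> omega

lemma finish_eq {l l' : List Node} {E : Set (Label × SCIForm)}
    (hb : Node.bot ∉ l) (hb' : Node.bot ∉ l')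
    (hA : wtA E l' = wtA E l)
    (hlen : (eqPairs l').length = (eqPairs l).length + 1) :
    ∀ s, (eqPairs l').length ≤ s * s → meas s l' E < meas s l E := by
  intro s hs
  simp only [meas, if_neg hb, if_neg hb']
  omega

lemma finish_bot {l l' : List Node} {E : Set (Label × SCIForm)}
    (hb : Node.bot ∉ l) (hb' : Node.bot ∈ l')
    (hA : wtA E l' = wtA E l) (hlen : eqPairs l' = eqPairs l) :
    ∀ s, (eqPairs l').length ≤ s * s → meas s l' E < meas s l E := by
  intro s _
  simp only [meas, if_neg hb, if_pos hb', hlen, hA]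
  omega

lemma extend_step {l l' : List Node} {E E' : Set (Label × SCIForm)}
    (hx : Extend l E l' E') (hI : Inv l E) :
    Inv l' E' ∧ wtW E' l' = wtW E l ∧
    ∀ s, (eqPairs l').length ≤ s * s → meas s l' E' < meas s l E := by
  cases hx with
  | negP w v φ hb hpw hw hE hnv hf =>
    obtain ⟨hI', hW, hA, hEQ⟩ := step_unary hI hw hE rfl hf
    exact ⟨hI', hW, finish_decomp hb (by simp [hb]) hA (Or.inl (by rw [hEQ]))⟩
  | negN w v φ hb hpw hw hE hnv hf =>
    obtain ⟨hI', hW, hA, hEQ⟩ := step_unary hI hw hE rfl hf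
    exact ⟨hI', hW, finish_decomp hb (by simp [hb]) hA (Or.inl (by rw [hEQ]))⟩
  | impP1 w v u φ ψ hb hpw hw hE h1 h2 hvu hfv hfu =>
    obtain ⟨hI', hW, hA, hlen⟩ := step_binary hI hw hE rfl hfv hfu hvu [] rfl (Or.inl rfl)
    exact ⟨hI', hW, finish_decomp hb (by simp [hb]) hA hlen⟩
  | impP2 w v u φ ψ hb hpw hw hE h1 h2 hvu hfv hfu =>
    obtain ⟨hI', hW, hA, hlen⟩ := step_binary hI hw hE rfl hfv hfu hvu [] rfl (Or.inl rfl)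
    exact ⟨hI', hW, finish_decomp hb (by simp [hb]) hA hlen⟩
  | impP3 w v u φ ψ hb hpw hw hE h1 h2 hvu hfv hfu =>
    obtain ⟨hI', hW, hA, hlen⟩ := step_binary hI hw hE rfl hfv hfu hvu [] rfl (Or.inl rfl)
    exact ⟨hI', hW, finish_decomp hb (by simp [hb]) hA hlen⟩
  | impN w v u φ ψ hb hpw hw hE h1 h2 hvu hfv hfu =>
    obtain ⟨hI', hW, hA, hlen⟩ := step_binary hI hw hE rfl hfv hfu hvu [] rfl (Or.inl rfl)
    exact ⟨hI', hW, finish_decomp hb (by simp [hb]) hA hlen⟩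
  | idnP1 w v u φ ψ hb hpw hw hE h1 h2 hvu hfv hfu =>
    obtain ⟨hI', hW, hA, hlen⟩ := step_binary hI hw hE rfl hfv hfu hvu
      [Node.eq v u] (by simp) (Or.inr (by simp))
    exact ⟨hI', hW, finish_decomp hb (by simp [hb]) hA hlen⟩
  | idnP2 w v u φ ψ hb hpw hw hE h1 h2 hvu hfv hfu =>
    obtain ⟨hI', hW, hA, hlen⟩ := step_binary hI hw hE rfl hfv hfu hvu
      [Node.eq v u] (by simp) (Or.inr (by simp))
    exact ⟨hI', hW, finish_decomp hb (by simp [hb]) hA hlen⟩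
  | idnN1 w v u φ ψ hb hpw hw hE h1 h2 hvu hfv hfu =>
    obtain ⟨hI', hW, hA, hlen⟩ := step_binary hI hw hE rfl hfv hfu hvu
      [Node.neq v u] (by simp) (Or.inl (by simp))
    exact ⟨hI', hW, finish_decomp hb (by simp [hb]) hA hlen⟩
  | idnN2 w v u φ ψ hb hpw hw hE h1 h2 hvu hfv hfu =>
    obtain ⟨hI', hW, hA, hlen⟩ := step_binary hI hw hE rfl hfv hfu hvu [] rfl (Or.inl rfl)
    exact ⟨hI', hW, finish_decomp hb (by simp [hb]) hA hlen⟩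
  | idnN3 w v u φ ψ hb hpw hw hE h1 h2 hvu hfv hfu =>
    obtain ⟨hI', hW, hA, hlen⟩ := step_binary hI hw hE rfl hfv hfu hvu [] rfl (Or.inl rfl)
    exact ⟨hI', hW, finish_decomp hb (by simp [hb]) hA hlen⟩
  | idnN4 w v u φ ψ hb hpw hw hE h1 h2 hvu hfv hfu =>
    obtain ⟨hI', hW, hA, hlen⟩ := step_binary hI hw hE rfl hfv hfu hvu
      [Node.neq v u] (by simp) (Or.inl (by simp))
    exact ⟨hI', hW, finish_decomp hb (by simp [hb]) hA hlen⟩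
  | eqNeg w v u y φ ψ hb h1 h2 h3 h4 h5 h6 =>
    obtain ⟨hI', hW, hA, hlen⟩ :=
      step_eq hI (mem_lfLabels.mpr ⟨_, h4⟩) (mem_lfLabels.mpr ⟨_, h5⟩) h6
    exact ⟨hI', hW, finish_eq hb (by simp [hb]) hA hlen⟩
  | eqImp w v w' v' x z φ ψ χ θ hb h1 h2 h3 h4 h5 h6 h7 h8 h9 =>
    obtain ⟨hI', hW, hA, hlen⟩ :=
      step_eq hI (mem_lfLabels.mpr ⟨_, h7⟩) (mem_lfLabels.mpr ⟨_, h8⟩) h9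
    exact ⟨hI', hW, finish_eq hb (by simp [hb]) hA hlen⟩
  | eqIdn w v w' v' x z φ ψ χ θ hb h1 h2 h3 h4 h5 h6 h7 h8 h9 =>
    obtain ⟨hI', hW, hA, hlen⟩ :=
      step_eq hI (mem_lfLabels.mpr ⟨_, h7⟩) (mem_lfLabels.mpr ⟨_, h8⟩) h9
    exact ⟨hI', hW, finish_eq hb (by simp [hb]) hA hlen⟩
  | ruleF w v φ hb h1 h2 h3 =>
    obtain ⟨hI', hW, hA, hlen⟩ :=
      step_eq hI (mem_lfLabels.mpr ⟨_, h1⟩) (mem_lfLabels.mpr ⟨_, h2⟩) h3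
    exact ⟨hI', hW, finish_eq hb (by simp [hb]) hA hlen⟩
  | ruleSym w v hb h1 h2 =>
    obtain ⟨hI', hW, hA, hlen⟩ :=
      step_eq hI (hI.eqlab w v h1).2 (hI.eqlab w v h1).1 h2
    exact ⟨hI', hW, finish_eq hb (by simp [hb]) hA hlen⟩
  | ruleTran w v u hb h1 h2 h3 =>
    obtain ⟨hI', hW, hA, hlen⟩ :=
      step_eq hI (hI.eqlab w v h1).1 (hI.eqlab v u h2).2 h3
    exact ⟨hI', hW, finish_eq hb (by simp [hb]) hA hlen⟩
  | bot1 w v hb h1 h2 =>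
    obtain ⟨hI', hW, hA, hlen⟩ := step_bot hI
    exact ⟨hI', hW, finish_bot hb (by simp) hA hlen⟩
  | bot2 w v hb h1 h2 h3 =>
    obtain ⟨hI', hW, hA, hlen⟩ := step_bot hI
    exact ⟨hI', hW, finish_bot hb (by simp) hA hlen⟩

end SCITermAux

open SCITermAux

/-- termination of TC_SCI.  On any branch of a TC_SCI-tableau with
w : φ at the root (formalized as a finite sequence of branch states, each
obtained from the previous one by a single rule application), rules are applied
at most |φ| + |φ|² + 1 times; consequently every TC_SCI-tableau for φ is
finite. -/
theorem stmt_14 (φ : SCIForm) (w : Label) (n : ℕ)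
    (g : ℕ → List Node) (h : ℕ → Set (Label × SCIForm))
    (hg0 : g 0 = [Node.lf w φ]) (hh0 : h 0 = ∅)
    (hchain : ∀ i < n, Extend (g i) (h i) (g (i + 1)) (h (i + 1))) :
    n ≤ SCIForm.size φ + SCIForm.size φ ^ 2 + 1 := by
  have key : ∀ i, i ≤ n →
      Inv (g i) (h i) ∧ wtW (h i) (g i) = φ.size ∧
      meas φ.size (g i) (h i) + i ≤ φ.size + φ.size * φ.size + 1 := by
    intro i
    induction i with
    | zero =>
      intro _
      rw [hg0, hh0]
      refine ⟨⟨by simp [lfLabels, lfPairs], by simp, ?_, by simp [eqPairs, List.filterMap_cons]⟩, ?_, ?_⟩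
      · intro a b hab; simp at hab
      · simp [wtW, lfPairs, wt_of_not_mem 1 (Set.notMem_empty ((w, φ) : Label × SCIForm))]
      · simp [meas, wtA, lfPairs, eqPairs, List.filterMap_cons,
          wt_of_not_mem 0 (Set.notMem_empty ((w, φ) : Label × SCIForm))]
        omega
    | succ i ih =>
      intro hin
      obtain ⟨hI, hW, hm⟩ := ih (Nat.le_of_succ_le hin)
      have hx := hchain i (Nat.lt_of_succ_le hin)
      obtain ⟨hI', hW', hdec⟩ := extend_step hx hI
      have hW2 : wtW (h (i + 1)) (g (i + 1)) = φ.size := hW'.trans hW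
      have hlen := eqlen_le hI'
      rw [hW2] at hlen
      have hd := hdec φ.size hlen
      exact ⟨hI', hW2, by omega⟩
  have hfin := (key n le_rfl).2.2
  have hn : n ≤ φ.size + φ.size * φ.size + 1 := by omega
  rw [pow_two]
  exact hn
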